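/- If the hypergraph product matrix H_X = [A⊗I | I⊗Bᵀ] admits a layer decomposition into k layers, then the matrix A admits a layer decomposition into at most k layers, obtained by restricting each layer to the rows {(a,b₀) : a a row of A} for any fixed row b₀ of Bᵀ. Consequently, k ≥ k_A, the minimal number of layers for A. -/
import Mathlib


/-- Restricting a k-layer decomposition of H_X = [A⊗I | I⊗Bᵀ] to the rows
{(a,b₀)} gives a layer decomposition of A into at most k layers; consequently
k is at least the minimal number of layers k_A of A. -/
theorem hgp_layers_restrict_to_A (mA nA mB nB k : ℕ)
    (A : Fin mA → Fin nA → ZMod 2) (Bt : Fin mB → Fin nB → ZMod 2)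
    (HX : Fin mA × Fin mB → (Fin nA × Fin mB ⊕ Fin mA × Fin nB) → ZMod 2)
    (hHX : ∀ a b col, HX (a, b) col =
      Sum.elim (fun p : Fin nA × Fin mB => if p.2 = b then A a p.1 else 0)
               (fun p : Fin mA × Fin nB => if p.1 = a then Bt b p.2 else 0) col)
    (L : Fin k → Set (Fin mA × Fin mB))
    (hpart : ∀ p, ∃! i, p ∈ L i)
    (hlayer : ∀ i, ∀ p ∈ L i, ∀ q ∈ L i, p ≠ q → ∀ col, HX p col = 0 ∨ HX q col = 0)
    (b₀ : Fin mB) :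
    (∀ a : Fin mA, ∃! i : Fin k, (a, b₀) ∈ L i) ∧
    (∀ i : Fin k, ∀ a : Fin mA, (a, b₀) ∈ L i → ∀ a' : Fin mA, (a', b₀) ∈ L i →
      a ≠ a' → ∀ col, A a col = 0 ∨ A a' col = 0) ∧
    sInf {k' : ℕ | ∃ LA : Fin k' → Set (Fin mA),
        (∀ a, ∃! i, a ∈ LA i) ∧
        ∀ i, ∀ a ∈ LA i, ∀ a' ∈ LA i, a ≠ a' → ∀ col, A a col = 0 ∨ A a' col = 0} ≤ k := by
  have hA : ∀ i : Fin k, ∀ a : Fin mA, (a, b₀) ∈ L i → ∀ a' : Fin mA, (a', b₀) ∈ L i →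
      a ≠ a' → ∀ col, A a col = 0 ∨ A a' col = 0 := by
    intro i a ha a' ha' hne col
    have h := hlayer i (a, b₀) ha (a', b₀) ha'
      (by simp [Prod.ext_iff, hne]) (Sum.inl (col, b₀))
    rw [hHX, hHX] at h
    simpa using h
  refine ⟨fun a => hpart (a, b₀), hA, ?_⟩
  apply Nat.sInf_le
  exact ⟨fun i => {a | (a, b₀) ∈ L i}, fun a => hpart (a, b₀), hA⟩
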